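/- The eigenvalues of H_N^{(1,1)} = −|0⟩⟨0| − |N⟩⟨N| + H_N^walk are exactly −2cos(kπ/(N+1)) for k = 0,...,N; in particular its smallest eigenvalue is −2, achieved by the uniform vector. -/

import Mathlib

open Matrix Real Finset

/-- The negative adjacency matrix of the path on vertices `0,…,N`. -/
noncomputable def walkM (N : ℕ) : Matrix (Fin (N+1)) (Fin (N+1)) ℝ :=
  Matrix.of fun i j => if (i:ℕ)+1 = (j:ℕ) ∨ (j:ℕ)+1 = (i:ℕ) then -1 else 0

/-- `H_N^{(L,R)} = −L|0⟩⟨0| − R|N⟩⟨N| + H_N^walk`. -/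
noncomputable def HLR (N : ℕ) (L R : ℝ) : Matrix (Fin (N+1)) (Fin (N+1)) ℝ :=
  walkM N + Matrix.single 0 0 (-L)
    + Matrix.single (Fin.last N) (Fin.last N) (-R)

/-- `μ` is an eigenvalue of the real matrix `M`. -/
def hasEig {n : Type*} [Fintype n] (M : Matrix n n ℝ) (μ : ℝ) : Prop :=
  ∃ v : n → ℝ, v ≠ 0 ∧ M.mulVec v = μ • v


set_option linter.unusedVariables false

lemma sum_ite_fst {M : ℕ} (f : Fin M → ℝ) (c : ℕ) :
    ∑ j : Fin M, (if c = (j:ℕ) then f j else 0) = if h : c < M then f ⟨c, h⟩ else 0 := by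
  split
  · next h =>
    rw [Finset.sum_eq_single ⟨c, h⟩]
    · simp
    · intro j _ hj
      rw [if_neg]
      intro hc
      exact hj (Fin.ext (by simpa using hc.symm))
    · simp
  · next h =>
    apply Finset.sum_eq_zero
    intro j _
    rw [if_neg]
    omega

lemma sum_ite_snd {M : ℕ} (f : Fin M → ℝ) (c : ℕ) :
    ∑ j : Fin M, (if (j:ℕ)+1 = c then f j else 0)
      = if h : 1 ≤ c ∧ c - 1 < M then f ⟨c-1, h.2⟩ else 0 := by
  split
  · next h =>
    rw [Finset.sum_eq_single ⟨c-1, h.2⟩]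
    · rw [if_pos (by simp; omega)]
    · intro j _ hj
      rw [if_neg]
      intro hc
      refine hj (Fin.ext ?_)
      simp
      omega
    · simp
  · next h =>
    apply Finset.sum_eq_zero
    intro j _
    rw [if_neg]
    omega

lemma HLR_mulVec (N : ℕ) (u : Fin (N+1) → ℝ) (i : Fin (N+1)) :
    (HLR N 1 1).mulVec u i
      = -(u ⟨min ((i:ℕ)+1) N, by omega⟩) - u ⟨(i:ℕ)-1, by omega⟩ := by
  classical
  unfold HLR walkM
  rw [Matrix.add_mulVec, Matrix.add_mulVec]
  have hstd : ∀ (a : Fin (N+1)) (c : ℝ),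
      (Matrix.single a a c).mulVec u i = if i = a then c * u a else 0 := by
    intro a c
    by_cases hia : i = a
    · subst hia
      simp [Matrix.mulVec, dotProduct, Matrix.single, ite_and,
        Finset.sum_ite_eq]
    · simp [Matrix.mulVec, dotProduct, Matrix.single, ite_and, hia,
        Ne.symm hia, Finset.sum_ite_eq]
  have hwalk : (Matrix.of fun i j : Fin (N+1) =>
        if (i:ℕ)+1 = (j:ℕ) ∨ (j:ℕ)+1 = (i:ℕ) then (-1:ℝ) else 0).mulVec u i
      = (if h : (i:ℕ)+1 < N+1 then -u ⟨(i:ℕ)+1, h⟩ else 0)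
        + (if h : 1 ≤ (i:ℕ) ∧ (i:ℕ)-1 < N+1 then -u ⟨(i:ℕ)-1, h.2⟩ else 0) := by
    simp only [Matrix.mulVec, dotProduct, Matrix.of_apply]
    have key : ∀ j : Fin (N+1),
        (if (i:ℕ)+1 = (j:ℕ) ∨ (j:ℕ)+1 = (i:ℕ) then (-1:ℝ) else 0) * u j
        = (if (i:ℕ)+1 = (j:ℕ) then -u j else 0) + (if (j:ℕ)+1 = (i:ℕ) then -u j else 0) := by
      intro j
      by_cases h1 : (i:ℕ)+1 = (j:ℕ) <;> by_cases h2 : (j:ℕ)+1 = (i:ℕ)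
      · omega
      · simp [h1, h2]
      · simp [h1, h2]
      · simp [h1, h2]
    rw [Finset.sum_congr rfl (fun j _ => key j), Finset.sum_add_distrib,
      sum_ite_fst (fun j => -u j) ((i:ℕ)+1), sum_ite_snd (fun j => -u j) (i:ℕ)]
  simp only [Pi.add_apply]
  rw [hstd, hstd, hwalk]
  rcases Nat.lt_or_ge (i:ℕ) N with hi | hi
  · rw [dif_pos (by omega)]
    by_cases h0 : (i:ℕ) = 0
    · have : i = 0 := Fin.ext (by simpa using h0)
      subst this
      rw [dif_neg (by omega), if_pos rfl, if_neg (by intro h; apply_fun Fin.val at h; simp [Fin.last] at h; omega)]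
      have h0' : (((0:Fin (N+1)):ℕ)) = 0 := rfl
      have hmin : min (((0:Fin (N+1)):ℕ)+1) N = 1 := by omega
      simp only [h0', hmin]
      simp only [ge_iff_le, neg_mul, one_mul, add_zero, zero_add]
      have hmin2 : 1 ⊓ N = 1 := by omega
      simp only [hmin2]
      have e0 : u 0 = u ⟨0, by omega⟩ := congrArg u (Fin.ext rfl)
      rw [e0]
      ring
    · rw [dif_pos (by omega), if_neg (by intro h; exact h0 (congrArg Fin.val h)),
        if_neg (by intro h; apply_fun Fin.val at h; simp [Fin.last] at h; omega)]
      have hmin : min ((i:ℕ)+1) N = (i:ℕ)+1 := by omega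
      simp only [hmin]
      ring
  · have hiN : (i:ℕ) = N := by omega
    have hilast : i = Fin.last N := Fin.ext (by simpa [Fin.last] using hiN)
    subst hilast
    by_cases hN0 : N = 0
    · subst hN0
      rw [dif_neg (by simp [Fin.last]), dif_neg (by simp [Fin.last]),
        if_pos (by rfl), if_pos rfl]
      simp [Fin.last]
      ring
    · rw [dif_neg (by simp [Fin.last]), dif_pos (by simp [Fin.last]; omega),
        if_neg (by intro h; apply_fun Fin.val at h; simp [Fin.last] at h; omega),
        if_pos rfl]
      have hmin : min (((Fin.last N : Fin (N+1)):ℕ)+1) N = N := by simp [Fin.last]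
      have hlv : ((Fin.last N : Fin (N+1)):ℕ) = N := rfl
      simp only [hmin, hlv]
      have hmin' : (N + 1) ⊓ N = N := by omega
      simp only [hmin']
      have e0 : u (Fin.last N) = u ⟨N, by omega⟩ := congrArg u (Fin.ext rfl)
      rw [e0]
      ring

noncomputable def vkv (N k : ℕ) : Fin (N+1) → ℝ :=
  fun j => Real.cos (((j:ℕ) + 1/2) * ((k:ℕ) * π / ((N:ℕ)+1)))

lemma trig_id (x θ : ℝ) : Real.cos (x-θ) + Real.cos (x+θ) = 2 * Real.cos θ * Real.cos x := by
  rw [Real.cos_sub, Real.cos_add]; ring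

lemma cos_reflect (N k : ℕ) :
    Real.cos (((N:ℝ)+1+1/2) * ((k:ℝ)*π/((N:ℝ)+1)))
      = Real.cos (((N:ℝ)+1/2) * ((k:ℝ)*π/((N:ℝ)+1))) := by
  have hNne : ((N:ℝ)+1) ≠ 0 := by positivity
  have e1 : ((N:ℝ)+1+1/2) * ((k:ℝ)*π/((N:ℝ)+1))
      = (k:ℝ)*π + (k:ℝ)*π/(2*((N:ℝ)+1)) := by field_simp
  have e2 : ((N:ℝ)+1/2) * ((k:ℝ)*π/((N:ℝ)+1))
      = (k:ℝ)*π - (k:ℝ)*π/(2*((N:ℝ)+1)) := by field_simp; ring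
  rw [e1, e2, Real.cos_add, Real.cos_sub, Real.sin_nat_mul_pi]
  ring

lemma vkv_ne_zero (N k : ℕ) (hk : k ≤ N) : vkv N k ≠ 0 := by
  intro h
  have h0 : vkv N k 0 = 0 := by rw [h]; rfl
  have h0' : vkv N k 0 = Real.cos ((((0:ℕ):ℝ) + 1/2) * ((k:ℕ) * π / ((N:ℕ)+1))) := rfl
  have hpos : 0 < Real.cos ((((0:ℕ):ℝ) + 1/2) * ((k:ℕ) * π / ((N:ℕ)+1))) := by
    apply Real.cos_pos_of_mem_Ioo
    constructor
    · have h1 : (0:ℝ) ≤ (((0:ℕ):ℝ) + 1/2) * ((k:ℕ) * π / ((N:ℕ)+1)) := by positivity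
      linarith [Real.pi_pos, Real.pi_gt_three]
    · have hklt : (k:ℝ) < (N:ℝ)+1 := by exact_mod_cast Nat.lt_succ_of_le hk
      have hN1 : (0:ℝ) < (N:ℝ)+1 := by positivity
      rw [Nat.cast_zero, zero_add, div_eq_mul_inv]
      calc 1/2 * ((k:ℝ)*π * ((N:ℝ)+1)⁻¹) < 1/2 * (((N:ℝ)+1)*π * ((N:ℝ)+1)⁻¹) := by
            apply mul_lt_mul_of_pos_left _ (by norm_num)
            apply mul_lt_mul_of_pos_right _ (by positivity)
            exact mul_lt_mul_of_pos_right hklt Real.pi_pos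
        _ = π/2 := by field_simp; try ring
  rw [← h0'] at hpos
  rw [h0] at hpos
  exact lt_irrefl 0 hpos

lemma eig_vkv (N k : ℕ) (hk : k ≤ N) :
    (HLR N 1 1).mulVec (vkv N k)
      = (-2 * Real.cos ((k:ℕ) * π / ((N:ℕ)+1))) • vkv N k := by
  funext i
  rw [HLR_mulVec]
  set θ : ℝ := (k:ℕ) * π / ((N:ℕ)+1) with hθ
  have key : ∀ x : ℝ, -(Real.cos ((x+1)*θ)) - Real.cos ((x-1)*θ)
      = -2 * Real.cos θ * Real.cos (x*θ) := by
    intro x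
    have h1 : (x+1)*θ = x*θ + θ := by ring
    have h2 : (x-1)*θ = x*θ - θ := by ring
    rw [h1, h2]
    have := trig_id (x*θ) θ
    linarith
  have hlow : vkv N k ⟨(i:ℕ)-1, by omega⟩
      = Real.cos (((((i:ℕ):ℝ) + 1/2) - 1)*θ) := by
    have e0 : vkv N k ⟨(i:ℕ)-1, by omega⟩
        = Real.cos (((((i:ℕ)-1 : ℕ):ℝ) + 1/2) * θ) := rfl
    rw [e0]
    rcases Nat.eq_zero_or_pos (i:ℕ) with h0 | h1
    · rw [h0]
      have e : (((0:ℕ) - 1 : ℕ):ℝ) = 0 := by norm_num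
      rw [e]
      rw [show ((0:ℝ) + 1/2 - 1) * θ = -((0 + 1/2) * θ) by ring, Real.cos_neg]
    · have e : (((i:ℕ)-1:ℕ):ℝ) = ((i:ℕ):ℝ) - 1 := by
        rw [Nat.cast_sub h1]; norm_num
      rw [e]
      ring_nf
  have hhigh : vkv N k ⟨min ((i:ℕ)+1) N, by omega⟩
      = Real.cos (((((i:ℕ):ℝ) + 1/2) + 1)*θ) := by
    have e0 : vkv N k ⟨min ((i:ℕ)+1) N, by omega⟩
        = Real.cos ((((min ((i:ℕ)+1) N : ℕ):ℝ) + 1/2) * θ) := rfl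
    rw [e0]
    rcases Nat.lt_or_ge (i:ℕ) N with h1 | h2
    · rw [show min ((i:ℕ)+1) N = (i:ℕ)+1 by omega]
      push_cast
      try ring_nf
    · have hiN : (i:ℕ) = N := by omega
      rw [show min ((i:ℕ)+1) N = N by omega, hiN, hθ]
      rw [show ((N:ℝ) + 1/2 + 1) = ((N:ℝ)+1+1/2) by ring]
      rw [cos_reflect N k]
      try ring_nf
  rw [hlow, hhigh]
  have hk2 := key (((i:ℕ):ℝ) + 1/2)
  rw [Pi.smul_apply, smul_eq_mul]
  have e1 : vkv N k i = Real.cos ((((i:ℕ):ℝ) + 1/2) * θ) := rfl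
  rw [e1]
  linarith [hk2]

lemma eigval_inj (N : ℕ) (a b : ℕ) (ha : a ≤ N) (hb : b ≤ N)
    (h : -2 * Real.cos ((a:ℝ)*π/((N:ℝ)+1)) = -2 * Real.cos ((b:ℝ)*π/((N:ℝ)+1))) : a = b := by
  have hc : Real.cos ((a:ℝ)*π/((N:ℝ)+1)) = Real.cos ((b:ℝ)*π/((N:ℝ)+1)) := by linarith
  have mem : ∀ c : ℕ, c ≤ N → (c:ℝ)*π/((N:ℝ)+1) ∈ Set.Icc 0 π := by
    intro c hcN
    constructor
    · positivity
    · rw [div_le_iff₀ (by positivity)]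
      have : (c:ℝ) ≤ N := by exact_mod_cast hcN
      nlinarith [Real.pi_pos]
  have harg := Real.injOn_cos (mem a ha) (mem b hb) hc
  have hπ : π ≠ 0 := Real.pi_ne_zero
  have hNe : ((N:ℝ)+1) ≠ 0 := by positivity
  field_simp at harg
  exact_mod_cast harg


/-- The eigenvalues of `H_N^{(1,1)} = −|0⟩⟨0| − |N⟩⟨N| + H_N^walk` are exactly
`−2 cos (kπ/(N+1))` for `k = 0,…,N`; in particular the smallest eigenvalue is
`−2`, achieved by the uniform vector. -/
theorem stmt_8 (N : ℕ) (hN : 1 ≤ N) :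
    (∀ μ : ℝ, hasEig (HLR N 1 1) μ ↔
      ∃ k : ℕ, k ≤ N ∧ μ = -2 * Real.cos (k * π / (N + 1))) ∧
    (HLR N 1 1).mulVec (fun _ : Fin (N+1) => (1:ℝ)) = (-2 : ℝ) • (fun _ : Fin (N+1) => (1:ℝ)) ∧
    ∀ μ : ℝ, hasEig (HLR N 1 1) μ → -2 ≤ μ := by
  have main : ∀ μ : ℝ, hasEig (HLR N 1 1) μ ↔
      ∃ k : ℕ, k ≤ N ∧ μ = -2 * Real.cos (k * π / (N + 1)) := by
    intro μ
    constructor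
    · intro hμ
      by_contra hcon
      push_neg at hcon
      obtain ⟨v, hv0, hveq⟩ := hμ
      set T : Module.End ℝ (Fin (N+1) → ℝ) := Matrix.mulVecLin (HLR N 1 1) with hT
      set ev : Fin (N+2) → ℝ :=
        fun j => if j.1 ≤ N then -2 * Real.cos ((j.1:ℝ) * π / ((N:ℝ)+1)) else μ with hev
      set xs : Fin (N+2) → (Fin (N+1) → ℝ) :=
        fun j => if j.1 ≤ N then vkv N j.1 else v with hxs
      have hinj : Function.Injective ev := by
        intro a b hab
        by_cases haN : a.1 ≤ N <;> by_cases hbN : b.1 ≤ N <;>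
          simp only [hev, haN, hbN, if_true, if_false, ite_true, ite_false] at hab
        · exact Fin.ext (eigval_inj N a.1 b.1 haN hbN hab)
        · exact absurd hab.symm (hcon a.1 haN)
        · exact absurd hab (hcon b.1 hbN)
        · exact Fin.ext (by omega)
      have heig : ∀ j, T.HasEigenvector (ev j) (xs j) := by
        intro j
        rw [Module.End.hasEigenvector_iff]
        by_cases hjN : j.1 ≤ N
        · refine ⟨Module.End.mem_eigenspace_iff.2 ?_, ?_⟩
          · show T (xs j) = ev j • xs j
            simp only [hev, hxs, if_pos hjN, ite_true, hT]
            rw [Matrix.mulVecLin_apply]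
            exact eig_vkv N j.1 hjN
          · simp only [hxs, if_pos hjN, ite_true]
            exact vkv_ne_zero N j.1 hjN
        · refine ⟨Module.End.mem_eigenspace_iff.2 ?_, ?_⟩
          · show T (xs j) = ev j • xs j
            simp only [hev, hxs, if_neg hjN, ite_false, hT]
            rw [Matrix.mulVecLin_apply]
            exact hveq
          · simp only [hxs, if_neg hjN, ite_false]
            exact hv0
      have lin := Module.End.eigenvectors_linearIndependent' T ev hinj xs heig
      have hcard := lin.fintype_card_le_finrank
      rw [Module.finrank_fin_fun, Fintype.card_fin] at hcard
      omega
    · rintro ⟨k, hk, rfl⟩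
      exact ⟨vkv N k, vkv_ne_zero N k hk, eig_vkv N k hk⟩
  refine ⟨main, ?_, ?_⟩
  · funext i
    rw [HLR_mulVec]
    simp only [Pi.smul_apply, smul_eq_mul]
    norm_num
  · intro μ hμ
    obtain ⟨k, hk, rfl⟩ := (main μ).1 hμ
    nlinarith [Real.cos_le_one ((k:ℝ) * π / ((N:ℝ)+1))]
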